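/- Let f : ℝ^d → ℝ be twice continuously differentiable with H-Lipschitz Hessian (H > 0), and fix x ∈ ℝ^d. Define the cubic-regularized model m(y) = f(x) + ⟨∇f(x), y − x⟩ + ½ ⟨∇²f(x)(y − x), y − x⟩ + (H/6) ‖y − x‖³, let x̃ be a global minimizer of m, and set r̃ = ‖x̃ − x‖. If x' ∈ ℝ^d satisfies m(x') ≤ m(x̃) + H r̃³ / 500, then f(x) − f(x') ≥ H r̃³ / 24. -/

import Mathlib

open scoped BigOperators

private lemma eps_le_zero (X K : ℝ) (hK : 0 ≤ K)
    (h : ∀ ε : ℝ, 0 < ε → ε < 1 → X ≤ ε * K) : X ≤ 0 := by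
  by_contra hX
  push_neg at hX
  set ε : ℝ := min (1/2) (X / (2 * (K + 1))) with hε
  have hε1 : 0 < ε := lt_min (by norm_num) (by positivity)
  have hε2 : ε < 1 := lt_of_le_of_lt (min_le_left _ _) (by norm_num)
  have h1 := h ε hε1 hε2
  have h3 : ε ≤ X / (2 * (K + 1)) := min_le_right _ _
  have h4 : X / (2 * (K + 1)) * K < X := by
    rw [div_mul_eq_mul_div, div_lt_iff₀ (by linarith)]
    nlinarith
  nlinarith [mul_le_mul_of_nonneg_right h3 hK]

private lemma taylor_cubic_ub {d : ℕ} (f : EuclideanSpace ℝ (Fin d) → ℝ) (hf : ContDiff ℝ 2 f)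
    (H : ℝ)
    (hhess : ∀ u v, ‖fderiv ℝ (fderiv ℝ f) u - fderiv ℝ (fderiv ℝ f) v‖ ≤ H * ‖u - v‖)
    (x y : EuclideanSpace ℝ (Fin d)) :
    f y ≤ f x + fderiv ℝ f x (y - x) + (1 / 2) * fderiv ℝ (fderiv ℝ f) x (y - x) (y - x)
      + H / 6 * ‖y - x‖ ^ 3 := by
  set v := y - x with hv
  have hγ : ∀ t : ℝ, HasDerivAt (fun t : ℝ => x + t • v) v t := fun t => by
    simpa using ((hasDerivAt_id t).smul_const v).const_add x
  have hfd : Differentiable ℝ f := hf.differentiable (by norm_num)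
  have hfd2 : Differentiable ℝ (fderiv ℝ f) :=
    (hf.fderiv_right (m := 1) (by norm_num)).differentiable one_ne_zero
  have hg : ∀ t : ℝ, HasDerivAt (fun t : ℝ => f (x + t • v)) (fderiv ℝ f (x + t • v) v) t :=
    fun t => (hfd (x + t • v)).hasFDerivAt.comp_hasDerivAt t (hγ t)
  have hg1 : ∀ t : ℝ, HasDerivAt (fun t : ℝ => fderiv ℝ f (x + t • v) v)
      (fderiv ℝ (fderiv ℝ f) (x + t • v) v v) t := fun t => by
    have h1 : HasDerivAt (fun t : ℝ => fderiv ℝ f (x + t • v))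
        (fderiv ℝ (fderiv ℝ f) (x + t • v) v) t :=
      (hfd2 (x + t • v)).hasFDerivAt.comp_hasDerivAt t (hγ t)
    simpa using h1.clm_apply (hasDerivAt_const t v)
  set a0 : ℝ := fderiv ℝ f x v with ha0
  set b0 : ℝ := fderiv ℝ (fderiv ℝ f) x v v with hb0
  have hlip : ∀ t : ℝ, 0 ≤ t →
      fderiv ℝ (fderiv ℝ f) (x + t • v) v v - b0 ≤ H * ‖v‖ ^ 3 * t := by
    intro t ht
    have h1 : fderiv ℝ (fderiv ℝ f) (x + t • v) v v - b0
        = ((fderiv ℝ (fderiv ℝ f) (x + t • v) - fderiv ℝ (fderiv ℝ f) x) v) v := by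
      simp [hb0, ContinuousLinearMap.sub_apply]
    rw [h1]
    have h2 : ‖((fderiv ℝ (fderiv ℝ f) (x + t • v) - fderiv ℝ (fderiv ℝ f) x) v) v‖
        ≤ ‖fderiv ℝ (fderiv ℝ f) (x + t • v) - fderiv ℝ (fderiv ℝ f) x‖ * ‖v‖ * ‖v‖ := by
      calc ‖((fderiv ℝ (fderiv ℝ f) (x + t • v) - fderiv ℝ (fderiv ℝ f) x) v) v‖
          ≤ ‖(fderiv ℝ (fderiv ℝ f) (x + t • v) - fderiv ℝ (fderiv ℝ f) x) v‖ * ‖v‖ :=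
            ((fderiv ℝ (fderiv ℝ f) (x + t • v) - fderiv ℝ (fderiv ℝ f) x) v).le_opNorm v
        _ ≤ ‖fderiv ℝ (fderiv ℝ f) (x + t • v) - fderiv ℝ (fderiv ℝ f) x‖ * ‖v‖ * ‖v‖ := by
            gcongr
            exact (fderiv ℝ (fderiv ℝ f) (x + t • v) - fderiv ℝ (fderiv ℝ f) x).le_opNorm v
    have h3 : ‖fderiv ℝ (fderiv ℝ f) (x + t • v) - fderiv ℝ (fderiv ℝ f) x‖
        ≤ H * (t * ‖v‖) := by
      have := hhess (x + t • v) x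
      simpa [norm_smul, abs_of_nonneg ht] using this
    have h4 := le_trans (le_abs_self _) h2
    have hvn : (0:ℝ) ≤ ‖v‖ := norm_nonneg _
    nlinarith [abs_nonneg (((fderiv ℝ (fderiv ℝ f) (x + t • v) - fderiv ℝ (fderiv ℝ f) x) v) v),
      mul_le_mul_of_nonneg_right (mul_le_mul_of_nonneg_right h3 hvn) hvn]
  set ψ : ℝ → ℝ := fun t => a0 + t * b0 + H * ‖v‖ ^ 3 * t ^ 2 / 2 - fderiv ℝ f (x + t • v) v
    with hψdef
  have hψ' : ∀ t : ℝ,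
      HasDerivAt ψ (b0 + H * ‖v‖ ^ 3 * t - fderiv ℝ (fderiv ℝ f) (x + t • v) v v) t := by
    intro t
    have h1 : HasDerivAt (fun t : ℝ => a0 + t * b0 + H * ‖v‖ ^ 3 * t ^ 2 / 2)
        (b0 + H * ‖v‖ ^ 3 * t) t := by
      have h0 := ((hasDerivAt_id t).mul_const b0).const_add a0
      have h2 := (((hasDerivAt_pow 2 t).const_mul (H * ‖v‖ ^ 3)).div_const 2)
      have h3 := h0.add h2
      exact h3.congr_deriv (by ring)
    exact h1.sub (hg1 t)
  have hψcont : Continuous ψ :=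
    continuous_iff_continuousAt.mpr fun t => (hψ' t).continuousAt
  have hψmono : MonotoneOn ψ (Set.Icc 0 1) := by
    apply monotoneOn_of_deriv_nonneg (convex_Icc 0 1) hψcont.continuousOn
    · exact fun t _ => ((hψ' t).differentiableAt).differentiableWithinAt
    · intro t ht
      rw [interior_Icc] at ht
      rw [(hψ' t).deriv]
      have := hlip t ht.1.le
      linarith
  have hψ0 : ψ 0 = 0 := by simp [hψdef, ha0]
  have hψnn : ∀ t ∈ Set.Icc (0:ℝ) 1, 0 ≤ ψ t := by
    intro t ht
    have := hψmono (Set.left_mem_Icc.mpr zero_le_one) ht ht.1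
    simpa [hψ0] using this
  set χ : ℝ → ℝ := fun t => f x + t * a0 + t ^ 2 / 2 * b0 + H * ‖v‖ ^ 3 * t ^ 3 / 6
    - f (x + t • v) with hχdef
  have hχ' : ∀ t : ℝ, HasDerivAt χ (ψ t) t := by
    intro t
    have h1 : HasDerivAt (fun t : ℝ => f x + t * a0 + t ^ 2 / 2 * b0 + H * ‖v‖ ^ 3 * t ^ 3 / 6)
        (a0 + t * b0 + H * ‖v‖ ^ 3 * t ^ 2 / 2) t := by
      have h2 := (((hasDerivAt_id t).mul_const a0).const_add (f x)).add
        (((hasDerivAt_pow 2 t).div_const 2).mul_const b0)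
      have h3 := h2.add (((hasDerivAt_pow 3 t).const_mul (H * ‖v‖ ^ 3)).div_const 6)
      exact h3.congr_deriv (by ring)
    have := h1.sub (hg t)
    exact this
  have hχcont : Continuous χ :=
    continuous_iff_continuousAt.mpr fun t => (hχ' t).continuousAt
  have hχmono : MonotoneOn χ (Set.Icc 0 1) := by
    apply monotoneOn_of_deriv_nonneg (convex_Icc 0 1) hχcont.continuousOn
    · exact fun t _ => ((hχ' t).differentiableAt).differentiableWithinAt
    · intro t ht
      rw [interior_Icc] at ht
      rw [(hχ' t).deriv]
      exact hψnn t ⟨ht.1.le, ht.2.le⟩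
  have hχ0 : χ 0 = 0 := by simp [hχdef]
  have hχ1 : 0 ≤ χ 1 := by
    have := hχmono (Set.left_mem_Icc.mpr zero_le_one) (Set.right_mem_Icc.mpr zero_le_one)
      zero_le_one
    simpa [hχ0] using this
  have hy : x + (1:ℝ) • v = y := by simp [hv]
  rw [hχdef] at hχ1
  simp only [hy] at hχ1
  have hfin : f y ≤ f x + a0 + 1/2 * b0 + H * ‖v‖^3 / 6 := by
    simp at hχ1
    linarith
  calc f y ≤ f x + a0 + 1/2 * b0 + H * ‖v‖^3 / 6 := hfin
    _ = f x + fderiv ℝ f x v + (1/2) * fderiv ℝ (fderiv ℝ f) x v v + H / 6 * ‖v‖ ^ 3 := by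
        rw [ha0, hb0]; ring

private lemma np_decrease (d : ℕ) (f : EuclideanSpace ℝ (Fin d) → ℝ)
    (H : ℝ) (hH : 0 < H)
    (x : EuclideanSpace ℝ (Fin d))
    (m : EuclideanSpace ℝ (Fin d) → ℝ)
    (hm : ∀ z, m z = f x + fderiv ℝ f x (z - x)
      + (1 / 2) * fderiv ℝ (fderiv ℝ f) x (z - x) (z - x)
      + H / 6 * ‖z - x‖ ^ 3)
    (xt : EuclideanSpace ℝ (Fin d)) (hxt : ∀ z, m xt ≤ m z)
    (r : ℝ) (hr : r = ‖xt - x‖) :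
    H * r ^ 3 / 12 ≤ f x - m xt := by
  set s := xt - x with hs
  set a : ℝ := fderiv ℝ f x s with ha
  set B : ℝ := (1/2) * fderiv ℝ (fderiv ℝ f) x s s with hB
  set c : ℝ := H / 6 * r ^ 3 with hc
  have hrn : 0 ≤ r := hr ▸ norm_nonneg _
  have hline : ∀ t : ℝ, m (x + t • s) = f x + t * a + t ^ 2 * B + c * |t| ^ 3 := by
    intro t
    rw [hm]
    have h1 : x + t • s - x = t • s := add_sub_cancel_left x (t • s)
    rw [h1]
    have h2 : fderiv ℝ f x (t • s) = t * a := by rw [map_smul]; simp [ha]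
    have h3 : fderiv ℝ (fderiv ℝ f) x (t • s) (t • s)
        = t ^ 2 * fderiv ℝ (fderiv ℝ f) x s s := by
      rw [map_smul]
      simp [map_smul]
      ring
    have h4 : ‖t • s‖ ^ 3 = |t| ^ 3 * r ^ 3 := by
      rw [norm_smul, Real.norm_eq_abs, hr, hs]
      ring
    rw [h2, h3, h4, hB, hc]
    ring
  have hxts : xt = x + (1:ℝ) • s := by simp [hs]
  have hmxt : m xt = f x + a + B + c := by
    rw [hxts, hline]; norm_num
  have hale : a ≤ 0 := by
    have := hxt (x + (-1 : ℝ) • s)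
    rw [hmxt, hline] at this
    simp at this
    linarith
  have hkey : a + 2 * B + 3 * c ≤ 0 := by
    apply eps_le_zero _ (|B| + 3 * c) (by positivity)
    intro ε hε0 hε1
    set t : ℝ := 1 - ε with ht
    have ht0 : 0 < t := by simp [ht]; linarith
    have ht1 : t < 1 := by simp [ht]; linarith
    have h1 := hxt (x + t • s)
    rw [hmxt, hline] at h1
    rw [abs_of_pos ht0] at h1
    have h2 : a * ε + B * (ε * (1 + t)) + c * (ε * (1 + t + t^2)) ≤ 0 := by nlinarith [h1]
    have h3 : a + B * (1 + t) + c * (1 + t + t ^ 2) ≤ 0 := by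
      have := mul_le_mul_of_nonneg_right h2 (le_of_lt (inv_pos.mpr hε0))
      rw [zero_mul] at this
      calc a + B * (1 + t) + c * (1 + t + t ^ 2)
          = (a * ε + B * (ε * (1 + t)) + c * (ε * (1 + t + t ^ 2))) * ε⁻¹ := by
            field_simp
        _ ≤ 0 := this
    have h5 : B * (1 - t) ≤ |B| * ε := by
      rw [ht]; simp only [sub_sub_cancel]
      exact mul_le_mul_of_nonneg_right (le_abs_self B) hε0.le
    have hc0 : (0:ℝ) ≤ c := by rw [hc]; positivity
    have h6 : c * (2 - t - t ^ 2) ≤ 3 * c * ε := by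
      rw [ht]; nlinarith [mul_nonneg hc0 (sq_nonneg ε)]
    linarith
  rw [hmxt]
  have hc0 : (0:ℝ) ≤ c := by rw [hc]; positivity
  linarith [hc.le, hc.ge]

/-- Sufficient decrease from an inexact minimizer of the
cubic-regularized model: if `x̃` globally minimizes the cubic model `m` of an
`H`-Hessian-Lipschitz function `f` around `x`, `r̃ = ‖x̃ − x‖`, and
`m(x') ≤ m(x̃) + H r̃³/500`, then `f(x) − f(x') ≥ H r̃³/24`. -/
theorem stmt_19 (d : ℕ) (f : EuclideanSpace ℝ (Fin d) → ℝ) (hf : ContDiff ℝ 2 f)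
    (H : ℝ) (hH : 0 < H)
    (hhess : ∀ u v, ‖fderiv ℝ (fderiv ℝ f) u - fderiv ℝ (fderiv ℝ f) v‖ ≤ H * ‖u - v‖)
    (x : EuclideanSpace ℝ (Fin d))
    (m : EuclideanSpace ℝ (Fin d) → ℝ)
    (hm : ∀ z, m z = f x + fderiv ℝ f x (z - x)
      + (1 / 2) * fderiv ℝ (fderiv ℝ f) x (z - x) (z - x)
      + H / 6 * ‖z - x‖ ^ 3)
    (xt : EuclideanSpace ℝ (Fin d)) (hxt : ∀ z, m xt ≤ m z)
    (r : ℝ) (hr : r = ‖xt - x‖)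
    (x' : EuclideanSpace ℝ (Fin d)) (hx' : m x' ≤ m xt + H * r ^ 3 / 500) :
    H * r ^ 3 / 24 ≤ f x - f x' := by
  have hfm : f x' ≤ m x' := by
    rw [hm x']
    exact taylor_cubic_ub f hf H hhess x x'
  have hnp : H * r ^ 3 / 12 ≤ f x - m xt := np_decrease d f H hH x m hm xt hxt r hr
  have hr3 : 0 ≤ H * r ^ 3 := by
    have : 0 ≤ r := hr ▸ norm_nonneg _
    positivity
  linarith
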